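/- Fix c > 0. If H is an r-uniform hypergraph on n vertices with minimum positive co-degree at least c*n, then for all sufficiently large n, H has at least (1/2)*(c^r/r!)*n^r edges. -/

import Mathlib

/-- Fix `c > 0`. For all sufficiently large `n`, every `r`-uniform
hypergraph on `n` vertices with minimum positive co-degree at least `c * n`
has at least `(1/2) * (c^r / r!) * n^r` edges. -/
theorem stmt_5 (r : ℕ) (hr : 2 ≤ r) (c : ℝ) (hc : 0 < c) :
    ∃ N : ℕ, ∀ n : ℕ, N ≤ n → ∀ H : Finset (Finset (Fin n)),
      (∀ e ∈ H, e.card = r) → H.Nonempty →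
      (∀ S : Finset (Fin n), S.card = r - 1 → (∃ e ∈ H, S ⊆ e) →
        c * n ≤ ((H.filter (fun e => S ⊆ e)).card : ℝ)) →
      (1 / 2) * (c ^ r / (r.factorial : ℝ)) * (n : ℝ) ^ r ≤ (H.card : ℝ) := by
  refine ⟨0, fun n _ H hcard hne hco => ?_⟩
  have hcn : (0:ℝ) ≤ c * n := by positivity
  have key : ∀ k, 1 ≤ k → k ≤ r → ∀ S : Finset (Fin n), S.card = r - k →
      (∃ e ∈ H, S ⊆ e) →
      (c*n)^k / (Nat.factorial k : ℝ) ≤ ((H.filter (fun e => S ⊆ e)).card : ℝ) := by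
    intro k hk1
    induction k, hk1 using Nat.le_induction with
    | base =>
      intro _ S hS hsup
      simpa using hco S (by simpa using hS) hsup
    | succ k hk ih =>
      intro hkr S hS hsup
      obtain ⟨e₀, he₀, hSe₀⟩ := hsup
      -- find an (r-1)-set S' between S and e₀
      obtain ⟨S', hSS', hS'e₀, hS'c⟩ :=
        Finset.exists_subsuperset_card_eq (n := r - 1) hSe₀
          (by rw [hS]; omega) (by rw [hcard e₀ he₀]; omega)
      set F := H.filter (fun e => S' ⊆ e) with hF
      have hFcn : c * n ≤ (F.card : ℝ) := hco S' hS'c ⟨e₀, he₀, hS'e₀⟩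
      -- each f ∈ F has exactly one vertex outside S'
      have hsing : ∀ f ∈ F, (f \ S').card = 1 := by
        intro f hf
        rw [Finset.mem_filter] at hf
        rw [Finset.card_sdiff_of_subset hf.2, hS'c, hcard f hf.1]
        omega
      set V := F.biUnion (fun f => f \ S') with hV
      have hVmem : ∀ v ∈ V, v ∉ S' ∧ ∃ f ∈ H, insert v S ⊆ f := by
        intro v hv
        rw [hV, Finset.mem_biUnion] at hv
        obtain ⟨f, hf, hvf⟩ := hv
        rw [Finset.mem_sdiff] at hvf
        rw [hF, Finset.mem_filter] at hf
        exact ⟨hvf.2, f, hf.1, Finset.insert_subset hvf.1 (hSS'.trans hf.2)⟩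
      have hVcard : (F.card : ℝ) ≤ (V.card : ℝ) := by
        have : V.card = F.card := by
          rw [hV, Finset.card_biUnion, Finset.sum_congr rfl hsing]
          · simp
          · intro f hf g hg hfg
            rw [Function.onFun, Finset.disjoint_left]
            intro x hxf hxg
            obtain ⟨a, ha⟩ := Finset.card_eq_one.mp (hsing f hf)
            obtain ⟨b, hb⟩ := Finset.card_eq_one.mp (hsing g hg)
            apply hfg
            have hxa : x = a := by rwa [ha, Finset.mem_singleton] at hxf
            have hxb : x = b := by rwa [hb, Finset.mem_singleton] at hxg
            have hFf := Finset.mem_filter.mp hf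
            have hFg := Finset.mem_filter.mp hg
            calc f = S' ∪ (f \ S') := (Finset.union_sdiff_of_subset hFf.2).symm
              _ = S' ∪ (g \ S') := by rw [ha, hb, ← hxa, ← hxb]
              _ = g := Finset.union_sdiff_of_subset hFg.2
        exact_mod_cast this.ge
      -- counting: sum of degrees of insert v S over v ∈ V is ≤ (k+1) * deg S
      have hnat : ∑ v ∈ V, (H.filter (fun e => insert v S ⊆ e)).card
          ≤ (k+1) * (H.filter (fun e => S ⊆ e)).card := by
        have step1 : ∑ v ∈ V, (H.filter (fun e => insert v S ⊆ e)).card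
            = ∑ e ∈ H, ∑ v ∈ V, (if insert v S ⊆ e then 1 else 0) := by
          rw [Finset.sum_comm]
          exact Finset.sum_congr rfl fun v _ => Finset.card_filter _ _
        rw [step1]
        have step2 : ∀ e ∈ H, ∑ v ∈ V, (if insert v S ⊆ e then 1 else 0)
            ≤ (if S ⊆ e then (k+1) else 0) := by
          intro e he
          have hfc : ∑ v ∈ V, (if insert v S ⊆ e then 1 else 0)
              = (V.filter (fun v => insert v S ⊆ e)).card :=
            (Finset.card_filter _ _).symm
          rw [hfc]
          by_cases hSe : S ⊆ e
          · simp only [hSe, if_true]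
            have hsub : V.filter (fun v => insert v S ⊆ e) ⊆ e \ S := by
              intro v hv
              rw [Finset.mem_filter] at hv
              rw [Finset.mem_sdiff]
              refine ⟨hv.2 (Finset.mem_insert_self v S), fun hvS => ?_⟩
              exact (hVmem v hv.1).1 (hSS' hvS)
            calc (V.filter (fun v => insert v S ⊆ e)).card ≤ (e \ S).card :=
                  Finset.card_le_card hsub
              _ = k + 1 := by
                  rw [Finset.card_sdiff_of_subset hSe, hS, hcard e he]; omega
          · simp only [hSe, if_false]
            refine Nat.le_zero.mpr ?_
            rw [Finset.card_eq_zero, Finset.filter_eq_empty_iff]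
            intro v _ hins
            exact hSe ((Finset.subset_insert v S).trans hins)
        calc ∑ e ∈ H, ∑ v ∈ V, (if insert v S ⊆ e then 1 else 0)
            ≤ ∑ e ∈ H, (if S ⊆ e then (k+1) else 0) := Finset.sum_le_sum step2
          _ = ∑ e ∈ H.filter (fun e => S ⊆ e), (k+1) := by
              rw [Finset.sum_filter]
          _ = (k+1) * (H.filter (fun e => S ⊆ e)).card := by
              rw [Finset.sum_const, smul_eq_mul, mul_comm]
      -- degree lower bound for each insert v S, from IH
      have hdeg : ∀ v ∈ V, (c*n)^k / (Nat.factorial k : ℝ)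
          ≤ ((H.filter (fun e => insert v S ⊆ e)).card : ℝ) := by
        intro v hv
        obtain ⟨hvS', hvsup⟩ := hVmem v hv
        apply ih (by omega)
        · rw [Finset.card_insert_of_notMem (fun h => hvS' (hSS' h)), hS]
          omega
        · exact hvsup
      have hsum1 : (V.card : ℝ) * ((c*n)^k / (Nat.factorial k : ℝ))
          ≤ ∑ v ∈ V, ((H.filter (fun e => insert v S ⊆ e)).card : ℝ) := by
        simpa using Finset.card_nsmul_le_sum V _ _ hdeg
      have hsum2 : ∑ v ∈ V, ((H.filter (fun e => insert v S ⊆ e)).card : ℝ)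
          ≤ ((k:ℝ)+1) * ((H.filter (fun e => S ⊆ e)).card : ℝ) := by
        exact_mod_cast hnat
      have hk1pos : (0:ℝ) < (k:ℝ) + 1 := by positivity
      rw [← mul_le_mul_iff_of_pos_right hk1pos]
      have heq : (c*n)^(k+1) / (Nat.factorial (k+1) : ℝ) * ((k:ℝ)+1)
          = (c*n) * ((c*n)^k / (Nat.factorial k : ℝ)) := by
        rw [Nat.factorial_succ]
        have : (Nat.factorial k : ℝ) ≠ 0 := by
          exact_mod_cast (Nat.factorial_pos k).ne'
        field_simp
        push_cast
        ring
      rw [heq]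
      have hnonneg : (0:ℝ) ≤ (c*n)^k / (Nat.factorial k : ℝ) := by positivity
      calc (c*n) * ((c*n)^k / (Nat.factorial k : ℝ))
          ≤ (V.card : ℝ) * ((c*n)^k / (Nat.factorial k : ℝ)) :=
            mul_le_mul_of_nonneg_right (hFcn.trans hVcard) hnonneg
        _ ≤ ∑ v ∈ V, ((H.filter (fun e => insert v S ⊆ e)).card : ℝ) := hsum1
        _ ≤ ((k:ℝ)+1) * ((H.filter (fun e => S ⊆ e)).card : ℝ) := hsum2
        _ = ((H.filter (fun e => S ⊆ e)).card : ℝ) * ((k:ℝ)+1) := mul_comm _ _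
  obtain ⟨e, he⟩ := hne
  have hmain := key r (by omega) le_rfl ∅ (by simp) ⟨e, he, Finset.empty_subset e⟩
  have hfilt : H.filter (fun e => (∅ : Finset (Fin n)) ⊆ e) = H := by
    apply Finset.filter_true_of_mem
    intro x _
    exact Finset.empty_subset x
  rw [hfilt] at hmain
  have hx : (0:ℝ) ≤ c ^ r / (Nat.factorial r : ℝ) * (n:ℝ) ^ r := by positivity
  have : (c*n)^r / (Nat.factorial r : ℝ) = c ^ r / (Nat.factorial r : ℝ) * (n:ℝ)^r := by
    rw [mul_pow]; ring
  rw [this] at hmain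
  nlinarith [hmain, hx]
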